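/- arXiv:2106.13562 — 2 statements merged into one kernel-verified Lean document; each statement's English description precedes it below -/
import Mathlib

section
/- Let H be the (n+2)×(n+2) matrix with H₀₁ = H₁₀ = 1 and all other entries 0, and a = exp(tH) for t ∈ ℝ. Then a·N̄(X)·a⁻¹ = N̄(e^{-t}X) for all X ∈ ℝⁿ. -/
open Matrix NormedSpace

noncomputable section

/-- The nilpotent Lie algebra element `n̄(X)`. -/
def nbar (n : ℕ) (X : Fin n → ℝ) : Matrix (Fin 2 ⊕ Fin n) (Fin 2 ⊕ Fin n) ℝ :=
  Matrix.fromBlocks 0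
    (Matrix.of fun i j => if i = 0 then X j else -X j)
    (Matrix.of fun (i : Fin n) (_ : Fin 2) => X i) 0

/-- `N̄(X) = exp(n̄(X))`. -/
def Nbar (n : ℕ) (X : Fin n → ℝ) : Matrix (Fin 2 ⊕ Fin n) (Fin 2 ⊕ Fin n) ℝ :=
  exp (nbar n X)

/-- The generator `H` of `𝔞`: `H₀₁ = H₁₀ = 1`, all other entries `0`. -/
def Hmat (n : ℕ) : Matrix (Fin 2 ⊕ Fin n) (Fin 2 ⊕ Fin n) ℝ :=
  Matrix.fromBlocks !![0, 1; 1, 0] 0 0 0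

/-- Semiconjugation lemma for the exponential in a Banach algebra. -/
theorem exp_semiconj {𝔸 : Type*} [NormedRing 𝔸] [NormedAlgebra ℝ 𝔸] [CompleteSpace 𝔸]
    {a b c : 𝔸} (h : a * b = b * c) : exp a * b = b * exp c := by
  have hp : ∀ k : ℕ, a ^ k * b = b * c ^ k := by
    intro k
    induction k with
    | zero => simp
    | succ k ih =>
      rw [pow_succ', mul_assoc, ih, ← mul_assoc, h, mul_assoc, ← pow_succ']
  simp only [exp_eq_tsum ℝ]
  rw [← (expSeries_summable' (𝕂 := ℝ) a).tsum_mul_right b,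
      ← (expSeries_summable' (𝕂 := ℝ) c).tsum_mul_left b]
  refine tsum_congr fun k => ?_
  rw [smul_mul_assoc, hp k, mul_smul_comm]

/-- `n̄` is linear in `X`; in particular it commutes with scalar multiplication. -/
theorem nbar_smul (n : ℕ) (r : ℝ) (X : Fin n → ℝ) : nbar n (r • X) = r • nbar n X := by
  ext (i | i) (j | j) <;>
    simp [nbar, Matrix.smul_apply, mul_ite, mul_comm]

/-- The key commutation relation: `H · n̄(X) = n̄(X) · (H - 1)`. -/
theorem key (n : ℕ) (X : Fin n → ℝ) :
    Hmat n * nbar n X = nbar n X * (Hmat n - 1) := by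
  ext (i | i) (j | j)
  · fin_cases i <;> fin_cases j <;>
      simp [Hmat, nbar, Matrix.mul_apply, Fintype.sum_sum_type, Fin.sum_univ_two,
        Matrix.one_apply, Matrix.sub_apply]
  · fin_cases i <;>
      simp [Hmat, nbar, Matrix.mul_apply, Fintype.sum_sum_type, Fin.sum_univ_two,
        Matrix.one_apply, Matrix.sub_apply, mul_ite, Finset.sum_ite_eq, Finset.sum_ite_eq']
  · fin_cases j <;>
      simp [Hmat, nbar, Matrix.mul_apply, Fintype.sum_sum_type, Fin.sum_univ_two,
        Matrix.one_apply, Matrix.sub_apply]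
  · simp [Hmat, nbar, Matrix.mul_apply, Fintype.sum_sum_type, Fin.sum_univ_two,
      Matrix.one_apply, Matrix.sub_apply]

/-- For `a = exp(tH)`: `a·N̄(X)·a⁻¹ = N̄(e^{-t}X)`. -/
theorem conj_Nbar_by_a (n : ℕ) (t : ℝ) (X : Fin n → ℝ) :
    exp (t • Hmat n) * Nbar n X * (exp (t • Hmat n))⁻¹ =
      Nbar n (Real.exp (-t) • X) := by
  letI : SeminormedRing (Matrix (Fin 2 ⊕ Fin n) (Fin 2 ⊕ Fin n) ℝ) :=
    Matrix.linftyOpSemiNormedRing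
  letI : NormedRing (Matrix (Fin 2 ⊕ Fin n) (Fin 2 ⊕ Fin n) ℝ) :=
    Matrix.linftyOpNormedRing
  letI : NormedAlgebra ℝ (Matrix (Fin 2 ⊕ Fin n) (Fin 2 ⊕ Fin n) ℝ) :=
    Matrix.linftyOpNormedAlgebra
  have hkey : (t • Hmat n) * nbar n X = nbar n X * (t • (Hmat n - 1)) := by
    rw [smul_mul_assoc, mul_smul_comm, key]
  have h1 := exp_semiconj hkey
  have h2 : exp (t • (Hmat n - 1)) = Real.exp (-t) • exp (t • Hmat n) := by
    have heq : t • (Hmat n - 1) =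
        algebraMap ℝ (Matrix (Fin 2 ⊕ Fin n) (Fin 2 ⊕ Fin n) ℝ) (-t) + t • Hmat n := by
      rw [smul_sub, Algebra.algebraMap_eq_smul_one]
      module
    rw [heq]
    rw [Matrix.exp_add_of_commute _ _ (Algebra.commute_algebraMap_left _ _)]
    erw [← algebraMap_exp_comm]
    rw [← Real.exp_eq_exp_ℝ, Algebra.algebraMap_eq_smul_one,
      smul_mul_assoc, one_mul]
  have hu : IsUnit (exp (t • Hmat n)) := Matrix.isUnit_exp _
  have ha : exp (t • Hmat n) * nbar n X * (exp (t • Hmat n))⁻¹ =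
      Real.exp (-t) • nbar n X := by
    erw [h1]
    erw [h2]
    rw [mul_smul_comm, smul_mul_assoc, mul_assoc,
      Matrix.mul_nonsing_inv _ ((Matrix.isUnit_iff_isUnit_det _).mp hu), mul_one]
  rw [Nbar, ← Matrix.exp_conj _ _ hu, ha, Nbar, nbar_smul]

end
end

section
/- For X ∈ ℝⁿ \ {0} and w̃₀ = diag(-1, 1, 1ₙ), one has the decomposition w̃₀·N̄(X) = N̄(U)·m·a·n where U = -X/|X|², a = exp(2 log|X| · H), m = diag(-1, -1, ψₙ(X)), and n is an element of N = exp(𝔫) (the group of matrices exp of first row (0,0,Z), second row (0,0,Z), bottom (Zᵀ,-Zᵀ,0ₙ)). -/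
open Matrix NormedSpace

noncomputable section

/-- The nilpotent Lie algebra element of `𝔫`: first row `(0,0,Z)`, second row
`(0,0,Z)`, bottom rows `(Zᵀ, -Zᵀ, 0ₙ)`. -/
def nupper (n : ℕ) (Z : Fin n → ℝ) : Matrix (Fin 2 ⊕ Fin n) (Fin 2 ⊕ Fin n) ℝ :=
  Matrix.fromBlocks 0
    (Matrix.of fun (_ : Fin 2) j => Z j)
    (Matrix.of fun i (j : Fin 2) => if j = 0 then Z i else -Z i) 0

/-- `ψₙ(X) = 1ₙ - (2/|X|²)·XᵀX`. -/
def psi (n : ℕ) (X : Fin n → ℝ) : Matrix (Fin n) (Fin n) ℝ :=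
  (1 : Matrix (Fin n) (Fin n) ℝ) -
    (2 / ∑ i, X i ^ 2) • Matrix.of (fun i j => X i * X j)

/-! ### Auxiliary block matrices -/

variable {n : ℕ}

/-- The `2 × n` matrix with rows `v`, `w`. -/
def R2 (v w : Fin n → ℝ) : Matrix (Fin 2) (Fin n) ℝ :=
  Matrix.of fun i j => if i = 0 then v j else w j

/-- The `n × 2` matrix with columns `v`, `w`. -/
def C2 (v w : Fin n → ℝ) : Matrix (Fin n) (Fin 2) ℝ :=
  Matrix.of fun i j => if j = 0 then v i else w i

lemma R2_congr {v w v' w' : Fin n → ℝ} (h1 : v = v') (h2 : w = w') : R2 v w = R2 v' w' := by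
  rw [h1, h2]

lemma C2_congr {v w v' w' : Fin n → ℝ} (h1 : v = v') (h2 : w = w') : C2 v w = C2 v' w' := by
  rw [h1, h2]

lemma R2_add (v w v' w' : Fin n → ℝ) : R2 v w + R2 v' w' = R2 (v + v') (w + w') := by
  ext i j
  fin_cases i <;> simp [R2]

lemma C2_add (v w v' w' : Fin n → ℝ) : C2 v w + C2 v' w' = C2 (v + v') (w + w') := by
  ext i j
  fin_cases j <;> simp [C2]

lemma mul_R2 (M : Matrix (Fin 2) (Fin 2) ℝ) (v w : Fin n → ℝ) :
    M * R2 v w = R2 (M 0 0 • v + M 0 1 • w) (M 1 0 • v + M 1 1 • w) := by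
  ext i j
  fin_cases i <;> simp [R2, Matrix.mul_apply, Fin.sum_univ_two]

lemma C2_mul (M : Matrix (Fin 2) (Fin 2) ℝ) (v w : Fin n → ℝ) :
    C2 v w * M = C2 (M 0 0 • v + M 1 0 • w) (M 0 1 • v + M 1 1 • w) := by
  ext i j
  fin_cases j <;> simp [C2, Matrix.mul_apply, Fin.sum_univ_two, mul_comm]

lemma R2_mul_C2 (v w p q : Fin n → ℝ) :
    R2 v w * C2 p q = !![v ⬝ᵥ p, v ⬝ᵥ q; w ⬝ᵥ p, w ⬝ᵥ q] := by
  ext i j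
  fin_cases i <;> fin_cases j <;> simp [R2, C2, Matrix.mul_apply, dotProduct]

lemma C2_mul_R2 (v w p q : Fin n → ℝ) :
    C2 p q * R2 v w = Matrix.of fun i j => p i * v j + q i * w j := by
  ext i j
  simp [R2, C2, Matrix.mul_apply, Fin.sum_univ_two]

lemma psi_apply (X : Fin n → ℝ) (i j : Fin n) :
    psi n X i j = (if i = j then 1 else 0) - 2 / (∑ i, X i ^ 2) * (X i * X j) := by
  simp [psi, Matrix.one_apply, Matrix.sub_apply]

lemma vec_mul_psi (X v : Fin n → ℝ) :
    ∀ j, (∑ k, v k * psi n X k j) = v j - 2 / (∑ i, X i ^ 2) * (v ⬝ᵥ X) * X j := by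
  intro j
  simp only [psi_apply, mul_sub, Finset.sum_sub_distrib, mul_ite, mul_one, mul_zero,
    Finset.sum_ite_eq', Finset.mem_univ, if_true]
  congr 1
  rw [dotProduct, Finset.mul_sum, Finset.sum_mul]
  refine Finset.sum_congr rfl fun k _ => by ring

lemma psi_mul_vec (X v : Fin n → ℝ) :
    ∀ i, (∑ k, psi n X i k * v k) = v i - 2 / (∑ i, X i ^ 2) * (X ⬝ᵥ v) * X i := by
  intro i
  simp only [psi_apply, sub_mul, Finset.sum_sub_distrib, ite_mul, one_mul, zero_mul,
    Finset.sum_ite_eq, Finset.mem_univ, if_true]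
  congr 1
  rw [dotProduct, Finset.mul_sum, Finset.sum_mul]
  refine Finset.sum_congr rfl fun k _ => by ring

lemma R2_mul_psi (X v w : Fin n → ℝ) :
    R2 v w * psi n X =
      R2 (v - (2 / (∑ i, X i ^ 2) * (v ⬝ᵥ X)) • X)
         (w - (2 / (∑ i, X i ^ 2) * (w ⬝ᵥ X)) • X) := by
  ext i j
  fin_cases i <;>
    simp [R2, Matrix.mul_apply, vec_mul_psi, mul_assoc]

lemma psi_mul_C2 (X p q : Fin n → ℝ) :
    psi n X * C2 p q =
      C2 (p - (2 / (∑ i, X i ^ 2) * (X ⬝ᵥ p)) • X)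
         (q - (2 / (∑ i, X i ^ 2) * (X ⬝ᵥ q)) • X) := by
  ext i j
  fin_cases j <;>
    simp [C2, Matrix.mul_apply, psi_mul_vec, mul_assoc]

/-! ### Exponentials -/

lemma exp_of_cube_eq_zero {N : Type*} [Fintype N] [DecidableEq N]
    (A : Matrix N N ℝ) (h : A ^ 3 = 0) :
    exp A = 1 + A + (2:ℝ)⁻¹ • A ^ 2 := by
  rw [exp_eq_tsum ℝ]
  beta_reduce
  rw [tsum_eq_sum (s := Finset.range 3) ?h]
  · norm_num [Finset.sum_range_succ, Nat.factorial]
  case h =>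
    intro b hb
    have hb3 : 3 ≤ b := by simpa using hb
    obtain ⟨c, rfl⟩ := Nat.exists_eq_add_of_le hb3
    rw [pow_add, h, zero_mul, smul_zero]

lemma dot_self_eq (Y : Fin n → ℝ) : Y ⬝ᵥ Y = ∑ i, Y i ^ 2 :=
  Finset.sum_congr rfl fun i _ => (sq (Y i)).symm

lemma nbar_eq_blocks (Y : Fin n → ℝ) :
    nbar n Y = Matrix.fromBlocks 0 (R2 Y (-Y)) (C2 Y Y) 0 := by
  unfold nbar R2 C2
  congr 1 <;> ext i j <;> simp

lemma nupper_eq_blocks (Z : Fin n → ℝ) :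
    nupper n Z = Matrix.fromBlocks 0 (R2 Z Z) (C2 Z (-Z)) 0 := by
  unfold nupper R2 C2
  congr 1 <;> ext i j <;> simp

lemma nbar_sq (Y : Fin n → ℝ) :
    nbar n Y ^ 2 = Matrix.fromBlocks
      !![∑ i, Y i ^ 2, ∑ i, Y i ^ 2; -∑ i, Y i ^ 2, -∑ i, Y i ^ 2] 0 0 0 := by
  rw [pow_two, nbar_eq_blocks, Matrix.fromBlocks_multiply]
  rw [Matrix.fromBlocks_inj]
  refine ⟨?_, by simp, by simp, ?_⟩
  · ext i j
    fin_cases i <;> fin_cases j <;>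
      simp [R2, C2, Matrix.mul_apply, ← dot_self_eq, dotProduct]
  · ext i j
    simp [R2, C2, Matrix.mul_apply, Fin.sum_univ_two]

lemma nbar_cube (Y : Fin n → ℝ) : nbar n Y ^ 3 = 0 := by
  rw [pow_succ, nbar_sq, nbar_eq_blocks, Matrix.fromBlocks_multiply]
  rw [show (0 : Matrix (Fin 2 ⊕ Fin n) (Fin 2 ⊕ Fin n) ℝ) = Matrix.fromBlocks 0 0 0 0 by
    simp]
  rw [Matrix.fromBlocks_inj]
  refine ⟨by simp, ?_, by simp, by simp⟩
  ext i j
  fin_cases i <;> simp [R2, Matrix.mul_apply, Fin.sum_univ_two, Matrix.vecHead, Matrix.vecTail, Function.comp] <;> ring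

lemma nupper_sq (Z : Fin n → ℝ) :
    nupper n Z ^ 2 = Matrix.fromBlocks
      !![∑ i, Z i ^ 2, -∑ i, Z i ^ 2; ∑ i, Z i ^ 2, -∑ i, Z i ^ 2] 0 0 0 := by
  rw [pow_two, nupper_eq_blocks, Matrix.fromBlocks_multiply]
  rw [Matrix.fromBlocks_inj]
  refine ⟨?_, by simp, by simp, ?_⟩
  · ext i j
    fin_cases i <;> fin_cases j <;>
      simp [R2, C2, Matrix.mul_apply, ← dot_self_eq, dotProduct]
  · ext i j
    simp [R2, C2, Matrix.mul_apply, Fin.sum_univ_two]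

lemma nupper_cube (Z : Fin n → ℝ) : nupper n Z ^ 3 = 0 := by
  rw [pow_succ, nupper_sq, nupper_eq_blocks, Matrix.fromBlocks_multiply]
  rw [show (0 : Matrix (Fin 2 ⊕ Fin n) (Fin 2 ⊕ Fin n) ℝ) = Matrix.fromBlocks 0 0 0 0 by
    simp]
  rw [Matrix.fromBlocks_inj]
  refine ⟨by simp, ?_, by simp, by simp⟩
  ext i j
  fin_cases i <;> simp [R2, Matrix.mul_apply, Fin.sum_univ_two, Matrix.vecHead, Matrix.vecTail, Function.comp] <;> ring

lemma Nbar_eq (Y : Fin n → ℝ) :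
    Nbar n Y = Matrix.fromBlocks
      !![1 + (∑ i, Y i ^ 2) / 2, (∑ i, Y i ^ 2) / 2;
         -((∑ i, Y i ^ 2) / 2), 1 - (∑ i, Y i ^ 2) / 2]
      (R2 Y (-Y)) (C2 Y Y) 1 := by
  rw [Nbar, exp_of_cube_eq_zero _ (nbar_cube Y), nbar_sq, nbar_eq_blocks]
  rw [← Matrix.fromBlocks_one (l := Fin 2) (m := Fin n) (α := ℝ),
    Matrix.fromBlocks_add, Matrix.fromBlocks_smul, Matrix.fromBlocks_add]
  rw [Matrix.fromBlocks_inj]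
  refine ⟨?_, by simp, by simp, by simp⟩
  ext i j
  fin_cases i <;> fin_cases j <;>
    simp [Matrix.one_apply] <;> ring

lemma exp_nupper_eq (Z : Fin n → ℝ) :
    exp (nupper n Z) = Matrix.fromBlocks
      !![1 + (∑ i, Z i ^ 2) / 2, -((∑ i, Z i ^ 2) / 2);
         (∑ i, Z i ^ 2) / 2, 1 - (∑ i, Z i ^ 2) / 2]
      (R2 Z Z) (C2 Z (-Z)) 1 := by
  rw [exp_of_cube_eq_zero _ (nupper_cube Z), nupper_sq, nupper_eq_blocks]
  rw [← Matrix.fromBlocks_one (l := Fin 2) (m := Fin n) (α := ℝ),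
    Matrix.fromBlocks_add, Matrix.fromBlocks_smul, Matrix.fromBlocks_add]
  rw [Matrix.fromBlocks_inj]
  refine ⟨?_, by simp, by simp, by simp⟩
  ext i j
  fin_cases i <;> fin_cases j <;>
    simp [Matrix.one_apply] <;> ring

lemma exp_smul_Hmat (n : ℕ) (t : ℝ) :
    exp (t • Hmat n) = Matrix.fromBlocks
      !![(Real.exp t + Real.exp (-t)) / 2, (Real.exp t - Real.exp (-t)) / 2;
         (Real.exp t - Real.exp (-t)) / 2, (Real.exp t + Real.exp (-t)) / 2]
      0 0 1 := by
  set Q : Matrix (Fin 2 ⊕ Fin n) (Fin 2 ⊕ Fin n) ℝ :=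
    Matrix.fromBlocks !![1, 1; 1, -1] 0 0 1 with hQdef
  set Qi : Matrix (Fin 2 ⊕ Fin n) (Fin 2 ⊕ Fin n) ℝ :=
    Matrix.fromBlocks !![1/2, 1/2; 1/2, -(1/2)] 0 0 1 with hQidef
  have h2 : (!![1, 1; 1, -1] : Matrix (Fin 2) (Fin 2) ℝ) * !![1/2, 1/2; 1/2, -(1/2)] = 1 := by
    ext i j
    fin_cases i <;> fin_cases j <;>
      norm_num [Matrix.mul_apply, Fin.sum_univ_two, Matrix.one_apply]
  have h2' : (!![1/2, 1/2; 1/2, -(1/2)] : Matrix (Fin 2) (Fin 2) ℝ) * !![1, 1; 1, -1] = 1 := by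
    ext i j
    fin_cases i <;> fin_cases j <;>
      norm_num [Matrix.mul_apply, Fin.sum_univ_two, Matrix.one_apply]
  have hQ : Q * Qi = 1 := by
    rw [hQdef, hQidef, Matrix.fromBlocks_multiply]
    simp only [Matrix.mul_zero, Matrix.zero_mul, Matrix.mul_one, Matrix.one_mul,
      add_zero, zero_add, h2]
    exact Matrix.fromBlocks_one
  have hQ' : Qi * Q = 1 := by
    rw [hQdef, hQidef, Matrix.fromBlocks_multiply]
    simp only [Matrix.mul_zero, Matrix.zero_mul, Matrix.mul_one, Matrix.one_mul,
      add_zero, zero_add, h2']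
    exact Matrix.fromBlocks_one
  set U : (Matrix (Fin 2 ⊕ Fin n) (Fin 2 ⊕ Fin n) ℝ)ˣ := ⟨Q, Qi, hQ, hQ'⟩ with hU
  have hdiag : t • Hmat n =
      (U : Matrix (Fin 2 ⊕ Fin n) (Fin 2 ⊕ Fin n) ℝ) *
        Matrix.diagonal (Sum.elim ![t, -t] (0 : Fin n → ℝ)) *
        ((U⁻¹ : (Matrix (Fin 2 ⊕ Fin n) (Fin 2 ⊕ Fin n) ℝ)ˣ) :
          Matrix (Fin 2 ⊕ Fin n) (Fin 2 ⊕ Fin n) ℝ) := by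
    show t • Hmat n = Q * Matrix.diagonal (Sum.elim ![t, -t] (0 : Fin n → ℝ)) * Qi
    rw [← Matrix.fromBlocks_diagonal, hQdef, hQidef, Hmat,
      Matrix.fromBlocks_smul, Matrix.fromBlocks_multiply, Matrix.fromBlocks_multiply]
    rw [Matrix.fromBlocks_inj]
    refine ⟨?_, by simp, by simp, by ext i j; simp [Matrix.diagonal]⟩
    rw [show Matrix.diagonal ![t, -t] = !![t, 0; 0, -t] by
      ext i j; fin_cases i <;> fin_cases j <;> simp [Matrix.diagonal_apply]]
    simp only [Matrix.mul_zero, Matrix.zero_mul, Matrix.mul_one, Matrix.one_mul,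
      add_zero, zero_add]
    rw [Matrix.mul_fin_two]
    ext i j
    fin_cases i <;> fin_cases j <;> simp [Matrix.smul_apply] <;> ring
  rw [hdiag, Matrix.exp_units_conj, Matrix.exp_diagonal]
  show Q * _ * Qi = _
  have hexp : (exp (Sum.elim ![t, -t] (0 : Fin n → ℝ)))
      = Sum.elim ![Real.exp t, Real.exp (-t)] (1 : Fin n → ℝ) := by
    funext i
    rcases i with i | i
    · fin_cases i <;> simp [Real.exp_eq_exp_ℝ]
    · simp
  rw [hexp, ← Matrix.fromBlocks_diagonal, hQdef, hQidef,
    Matrix.fromBlocks_multiply, Matrix.fromBlocks_multiply]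
  rw [Matrix.fromBlocks_inj]
  refine ⟨?_, by simp, by simp, by ext i j; simp [Matrix.diagonal_apply, Matrix.one_apply]⟩
  rw [show Matrix.diagonal ![Real.exp t, Real.exp (-t)] = !![Real.exp t, 0; 0, Real.exp (-t)] by
    ext i j; fin_cases i <;> fin_cases j <;> simp [Matrix.diagonal_apply]]
  simp only [Matrix.mul_zero, Matrix.zero_mul, Matrix.mul_one, Matrix.one_mul,
    add_zero, zero_add]
  rw [Matrix.mul_fin_two]
  ext i j
  fin_cases i <;> fin_cases j <;> simp <;> ring

set_option maxHeartbeats 1600000 in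
/-- For `X ≠ 0` and `w̃₀ = diag(-1,1,1ₙ)` one has the Bruhat decomposition
`w̃₀·N̄(X) = N̄(U)·m·a·n` with `U = -X/|X|²`, `m = diag(-1,-1,ψₙ(X))`,
`a = exp(2 log|X|·H)` and some `n ∈ N = exp(𝔫)`. -/
theorem bruhat_decomposition (n : ℕ) (X : Fin n → ℝ) (hX : X ≠ 0) :
    let w0 : Matrix (Fin 2 ⊕ Fin n) (Fin 2 ⊕ Fin n) ℝ :=
      Matrix.fromBlocks (Matrix.diagonal ![-1, 1]) 0 0 1
    let U : Fin n → ℝ := -(∑ i, X i ^ 2)⁻¹ • X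
    let m : Matrix (Fin 2 ⊕ Fin n) (Fin 2 ⊕ Fin n) ℝ :=
      Matrix.fromBlocks (-(1 : Matrix (Fin 2) (Fin 2) ℝ)) 0 0 (psi n X)
    let a : Matrix (Fin 2 ⊕ Fin n) (Fin 2 ⊕ Fin n) ℝ :=
      exp ((2 * Real.log (Real.sqrt (∑ i, X i ^ 2))) • Hmat n)
    ∃ Z : Fin n → ℝ, w0 * Nbar n X = Nbar n U * m * a * exp (nupper n Z) := by
  intro w0 U m a
  simp only [w0, U, m, a]
  have hs : 0 < ∑ i, X i ^ 2 := by
    have hx : ∃ i, X i ≠ 0 := by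
      by_contra hc
      push_neg at hc
      exact hX (funext hc)
    obtain ⟨i, hi⟩ := hx
    exact Finset.sum_pos' (fun j _ => sq_nonneg _) ⟨i, Finset.mem_univ i, by positivity⟩
  have hs0 : (∑ i, X i ^ 2) ≠ 0 := ne_of_gt hs
  have hXX : X ⬝ᵥ X = ∑ i, X i ^ 2 := dot_self_eq X
  have hsmulsq : ∀ c : ℝ, (∑ i, (c • X) i ^ 2) = c ^ 2 * ∑ i, X i ^ 2 := by
    intro c
    simp only [Pi.smul_apply, smul_eq_mul, mul_pow]
    rw [← Finset.mul_sum]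
  refine ⟨(∑ i, X i ^ 2)⁻¹ • X, ?_⟩
  have hU2 : (∑ i, (-(∑ i, X i ^ 2)⁻¹ • X) i ^ 2) = (∑ i, X i ^ 2)⁻¹ := by
    rw [hsmulsq]
    field_simp
  have hZ2 : (∑ i, ((∑ i, X i ^ 2)⁻¹ • X) i ^ 2) = (∑ i, X i ^ 2)⁻¹ := by
    rw [hsmulsq]
    field_simp
  have ha : exp ((2 * Real.log (Real.sqrt (∑ i, X i ^ 2))) • Hmat n)
      = Matrix.fromBlocks
        !![((∑ i, X i ^ 2) + (∑ i, X i ^ 2)⁻¹) / 2, ((∑ i, X i ^ 2) - (∑ i, X i ^ 2)⁻¹) / 2;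
           ((∑ i, X i ^ 2) - (∑ i, X i ^ 2)⁻¹) / 2, ((∑ i, X i ^ 2) + (∑ i, X i ^ 2)⁻¹) / 2]
        0 0 1 := by
    rw [exp_smul_Hmat]
    have h1 : Real.exp (2 * Real.log (Real.sqrt (∑ i, X i ^ 2))) = ∑ i, X i ^ 2 := by
      rw [Real.log_sqrt hs.le, show 2 * (Real.log (∑ i, X i ^ 2) / 2) = Real.log (∑ i, X i ^ 2)
        by ring, Real.exp_log hs]
    have h2 : Real.exp (-(2 * Real.log (Real.sqrt (∑ i, X i ^ 2)))) = (∑ i, X i ^ 2)⁻¹ := by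
      rw [Real.exp_neg, h1]
    rw [h1, h2]
  rw [Nbar_eq, Nbar_eq, exp_nupper_eq, hU2, hZ2, ha]
  set s := ∑ i, X i ^ 2 with hs_def
  rw [show Matrix.diagonal ![(-1:ℝ), 1] = !![-1, 0; 0, 1] by
    ext i j; fin_cases i <;> fin_cases j <;> simp [Matrix.diagonal_apply]]
  rw [show -(1 : Matrix (Fin 2) (Fin 2) ℝ) = !![-1, 0; 0, -1] by
    ext i j; fin_cases i <;> fin_cases j <;> simp [Matrix.one_apply]]
  simp only [Matrix.fromBlocks_multiply]
  simp only [Matrix.mul_zero, Matrix.zero_mul, Matrix.mul_one, Matrix.one_mul,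
    add_zero, zero_add]
  rw [Matrix.fromBlocks_inj]
  refine ⟨?_, ?_, ?_, ?_⟩
  · -- top-left 2×2 block
    rw [R2_mul_psi, R2_mul_C2]
    ext i j
    fin_cases i <;> fin_cases j <;>
      (simp [Matrix.mul_apply, Fin.sum_univ_two, Matrix.add_apply,
        sub_dotProduct, smul_dotProduct, dotProduct_smul,
        neg_dotProduct, dotProduct_neg, smul_eq_mul, hXX, ← hs_def,
        Pi.smul_apply, Pi.sub_apply, Pi.neg_apply, Pi.add_apply]
       field_simp
       ring)
  · -- top-right 2×n block
    rw [R2_mul_psi, mul_R2, mul_R2, R2_add]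
    refine R2_congr ?_ ?_ <;>
      (funext j
       simp [Matrix.mul_apply, Fin.sum_univ_two,
         smul_dotProduct, dotProduct_smul,
         neg_dotProduct, dotProduct_neg, smul_eq_mul, hXX, ← hs_def,
         Pi.smul_apply, Pi.sub_apply, Pi.neg_apply, Pi.add_apply]
       field_simp
       ring)
  · -- bottom-left n×2 block
    rw [psi_mul_C2, C2_mul, C2_mul, C2_mul, C2_add]
    refine C2_congr ?_ ?_ <;>
      (funext i
       simp [Matrix.mul_apply, Fin.sum_univ_two,
         smul_dotProduct, dotProduct_smul,
         neg_dotProduct, dotProduct_neg, smul_eq_mul, hXX, ← hs_def,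
         Pi.smul_apply, Pi.sub_apply, Pi.neg_apply, Pi.add_apply]
       field_simp
       ring)
  · -- bottom-right n×n block
    rw [C2_mul, C2_mul, C2_mul_R2]
    ext i j
    simp [psi_apply, Matrix.add_apply, Matrix.one_apply, smul_eq_mul, ← hs_def,
      Pi.smul_apply, Pi.sub_apply, Pi.neg_apply, Pi.add_apply]
    split_ifs <;> (field_simp; ring)

end
end
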